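/- If {s_1, …, s_r} ⊆ {−1,1}^n is a Schur independent family of sign vectors, then conv{s_1 s_1^T, …, s_r s_r^T} is a simplicial face of the elliptope E_n. -/

import Mathlib

open Matrix

noncomputable section

/-- A sign vector: every entry is `1` or `-1`. -/
def IsSignVec {n : ℕ} (s : Fin n → ℝ) : Prop := ∀ k, s k = 1 ∨ s k = -1

/-- Schur independence of a family of vectors: the all-ones vector together with the
entrywise (Schur) products `s i ⊙ s j` for `i < j` form a linearly independent family. -/
def SchurIndependent {n r : ℕ} (s : Fin r → Fin n → ℝ) : Prop :=
  LinearIndependent ℝ (fun p : Option {q : Fin r × Fin r // q.1 < q.2} =>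
    p.elim (fun _ : Fin n => (1 : ℝ)) (fun q k => s q.1.1 k * s q.1.2 k))

/-- The elliptope: positive-semidefinite matrices with unit diagonal (correlation matrices). -/
def elliptope (n : ℕ) : Set (Matrix (Fin n) (Fin n) ℝ) :=
  {A | A.PosSemidef ∧ ∀ i, A i i = 1}

/-- A face of a convex set `K`: a convex subset `F ⊆ K` such that whenever a point of `F`
is a proper convex combination of two points of `K`, both points lie in `F`. -/
def IsFace {V : Type*} [AddCommGroup V] [Module ℝ V] (K F : Set V) : Prop :=
  F ⊆ K ∧ Convex ℝ F ∧
    ∀ x ∈ K, ∀ y ∈ K, ∀ τ : ℝ, 0 < τ → τ < 1 → τ • x + (1 - τ) • y ∈ F → x ∈ F ∧ y ∈ F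

/-- A simplicial face: a face that is the convex hull of a finite affinely independent set. -/
def IsSimplicialFace {V : Type*} [AddCommGroup V] [Module ℝ V] (K F : Set V) : Prop :=
  IsFace K F ∧ ∃ t : Finset V,
    AffineIndependent ℝ (Subtype.val : {x : V // x ∈ t} → V) ∧ F = convexHull ℝ (t : Set V)

section
open Finset

namespace SchurAux

variable {n r : ℕ}

lemma sq_one {s : Fin n → ℝ} (hs : IsSignVec s) (k : Fin n) : s k * s k = 1 := by
  rcases hs k with h | h <;> rw [h] <;> norm_num

/-- Splitting a symmetric double sum into diagonal and twice the strictly-upper part. -/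
lemma sum_split (f : Fin r × Fin r → ℝ) (hf : ∀ a b, f (b, a) = f (a, b)) :
    ∑ i, ∑ j, f (i, j) =
      (∑ i, f (i, i)) + 2 * ∑ q ∈ Finset.univ.filter (fun q : Fin r × Fin r => q.1 < q.2), f q := by
  classical
  have h0 : ∑ i, ∑ j, f (i, j) = ∑ q ∈ (Finset.univ ×ˢ Finset.univ : Finset (Fin r × Fin r)), f q := by
    rw [Finset.sum_product]
  rw [h0, ← Finset.diag_union_offDiag, Finset.sum_union (Finset.disjoint_diag_offDiag _),
    Finset.sum_diag]
  have hsplit := Finset.sum_filter_add_sum_filter_not (Finset.univ.offDiag)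
    (fun q : Fin r × Fin r => q.1 < q.2) f
  have h1 : Finset.univ.offDiag.filter (fun q : Fin r × Fin r => q.1 < q.2) =
      Finset.univ.filter (fun q : Fin r × Fin r => q.1 < q.2) := by
    ext q
    simp only [Finset.mem_filter, Finset.mem_offDiag, Finset.mem_univ, true_and]
    exact ⟨fun h => h.2, fun h => ⟨ne_of_lt h, h⟩⟩
  have h2 : ∑ q ∈ Finset.univ.offDiag.filter (fun q : Fin r × Fin r => ¬ q.1 < q.2), f q =
      ∑ q ∈ Finset.univ.filter (fun q : Fin r × Fin r => q.1 < q.2), f q := by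
    refine Finset.sum_nbij' (fun q => (q.2, q.1)) (fun q => (q.2, q.1)) ?_ ?_ ?_ ?_ ?_
    · intro a ha
      simp only [Finset.mem_filter, Finset.mem_offDiag, Finset.mem_univ, true_and] at ha ⊢
      exact lt_of_le_of_ne (not_lt.mp ha.2) (Ne.symm ha.1)
    · intro a ha
      simp only [Finset.mem_filter, Finset.mem_offDiag, Finset.mem_univ, true_and] at ha ⊢
      exact ⟨(ne_of_lt ha).symm, not_lt.mpr (le_of_lt ha)⟩
    · intro a _; rfl
    · intro a _; rfl
    · intro a _; exact (hf a.1 a.2).symm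
  rw [← hsplit, h1, h2]
  ring


/-- The key diagonal-coefficient lemma from Schur independence. -/
lemma key_coeff {s : Fin r → Fin n → ℝ} (hs : ∀ i, IsSignVec (s i))
    (hschur : SchurIndependent s) (A : Matrix (Fin r) (Fin r) ℝ)
    (hA : ∀ i j, A j i = A i j)
    (hdiag : ∀ k, (∑ i, ∑ j, A i j * (s i k * s j k)) = 1) :
    (∀ i j, i < j → A i j = 0) ∧ (∑ i, A i i) = 1 := by
  classical
  set c : Option {q : Fin r × Fin r // q.1 < q.2} → ℝ :=
    fun p => p.elim ((∑ i, A i i) - 1) (fun q => 2 * A q.1.1 q.1.2) with hc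
  have hzero : ∑ p, c p • (fun p : Option {q : Fin r × Fin r // q.1 < q.2} =>
      p.elim (fun _ : Fin n => (1 : ℝ)) (fun q k => s q.1.1 k * s q.1.2 k)) p = 0 := by
    funext k
    rw [Finset.sum_apply]
    simp only [Pi.smul_apply, smul_eq_mul]
    rw [Fintype.sum_option]
    simp only [Option.elim, hc]
    have hsub : ∑ q ∈ Finset.univ.filter (fun q : Fin r × Fin r => q.1 < q.2),
        (2 * A q.1 q.2 * (s q.1 k * s q.2 k)) =
        ∑ x : {q : Fin r × Fin r // q.1 < q.2}, 2 * A x.1.1 x.1.2 * (s x.1.1 k * s x.1.2 k) :=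
      Finset.sum_subtype _ (by simp) _
    have hss := sum_split (fun q : Fin r × Fin r => A q.1 q.2 * (s q.1 k * s q.2 k))
      (fun a b => by simp only; rw [hA]; ring)
    rw [hdiag k] at hss
    have hdd : ∑ i, A i i * (s i k * s i k) = ∑ i, A i i := by
      apply Finset.sum_congr rfl; intro i _; rw [sq_one (hs i) k, mul_one]
    rw [hdd] at hss
    have : ∑ x : {q : Fin r × Fin r // q.1 < q.2},
        2 * A x.1.1 x.1.2 * (s x.1.1 k * s x.1.2 k) = 1 - ∑ i, A i i := by
      rw [← hsub]
      have : ∑ q ∈ Finset.univ.filter (fun q : Fin r × Fin r => q.1 < q.2),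
          (2 * A q.1 q.2 * (s q.1 k * s q.2 k)) =
          2 * ∑ q ∈ Finset.univ.filter (fun q : Fin r × Fin r => q.1 < q.2),
            A q.1 q.2 * (s q.1 k * s q.2 k) := by
        rw [Finset.mul_sum]; apply Finset.sum_congr rfl; intro q _; ring
      rw [this]; linarith
    rw [Pi.zero_apply]
    calc ((∑ i, A i i) - 1) * 1 + ∑ x : {q : Fin r × Fin r // q.1 < q.2},
        2 * A x.1.1 x.1.2 * (s x.1.1 k * s x.1.2 k)
        = ((∑ i, A i i) - 1) * 1 + (1 - ∑ i, A i i) := by rw [this]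
      _ = 0 := by ring
  have hall := Fintype.linearIndependent_iff.mp hschur c hzero
  constructor
  · intro i j hij
    have := hall (some ⟨(i, j), hij⟩)
    simp only [hc, Option.elim] at this
    linarith
  · have := hall none
    simp only [hc, Option.elim] at this
    linarith


/-- Schur independence implies linear independence of the vectors themselves. -/
lemma lin_s {s : Fin r → Fin n → ℝ} (hs : ∀ i, IsSignVec (s i))
    (hschur : SchurIndependent s) : LinearIndependent ℝ s := by
  classical
  rw [Fintype.linearIndependent_iff]
  intro g hg j
  set ψ : Fin r → Option {q : Fin r × Fin r // q.1 < q.2} := fun i =>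
    if h : i = j then none
    else if h2 : i < j then some ⟨(i, j), h2⟩
    else some ⟨(j, i), lt_of_le_of_ne (not_lt.mp h2) (Ne.symm h)⟩ with hψ
  set c : Option {q : Fin r × Fin r // q.1 < q.2} → ℝ :=
    fun p => p.elim (g j) (fun q => if q.1.1 = j then g q.1.2
      else if q.1.2 = j then g q.1.1 else 0) with hc
  have hinj : ∀ x ∈ Finset.univ, ∀ y ∈ Finset.univ, ψ x = ψ y → x = y := by
    intro x _ y _ h
    simp only [hψ] at h
    split_ifs at h <;> simp_all [Prod.ext_iff]
  have hzero : ∑ p, c p • (fun p : Option {q : Fin r × Fin r // q.1 < q.2} =>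
      p.elim (fun _ : Fin n => (1 : ℝ)) (fun q k => s q.1.1 k * s q.1.2 k)) p = 0 := by
    funext k
    rw [Finset.sum_apply]
    simp only [Pi.smul_apply, smul_eq_mul, Pi.zero_apply]
    have himg : ∀ p ∈ (Finset.univ : Finset (Option {q : Fin r × Fin r // q.1 < q.2})),
        p ∉ Finset.univ.image ψ →
        c p * (p.elim (fun _ : Fin n => (1 : ℝ)) (fun q k => s q.1.1 k * s q.1.2 k)) k = 0 := by
      rintro p - hp
      match p with
      | none =>
        exact absurd (Finset.mem_image.mpr ⟨j, Finset.mem_univ _, by simp [hψ]⟩) hp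
      | some ⟨(a, b), hab⟩ =>
        by_cases ha : a = j
        · subst ha
          refine absurd (Finset.mem_image.mpr ⟨b, Finset.mem_univ _, ?_⟩) hp
          simp only [hψ, dif_neg (ne_of_gt hab), dif_neg (not_lt.mpr (le_of_lt hab))]
        · by_cases hb : b = j
          · subst hb
            refine absurd (Finset.mem_image.mpr ⟨a, Finset.mem_univ _, ?_⟩) hp
            simp only [hψ, dif_neg ha, dif_pos hab]
          · simp only [hc, Option.elim, ha, hb, if_false, zero_mul]
    rw [← Finset.sum_subset (Finset.subset_univ _) himg, Finset.sum_image hinj]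
    have hterm : ∀ i ∈ (Finset.univ : Finset (Fin r)),
        c (ψ i) * ((ψ i).elim (fun _ : Fin n => (1 : ℝ)) (fun q k => s q.1.1 k * s q.1.2 k)) k
        = g i * (s i k * s j k) := by
      intro i _
      by_cases h : i = j
      · subst h
        simp only [hψ, dif_pos rfl, hc, Option.elim]
        rw [sq_one (hs i) k]
      · by_cases h2 : i < j
        · have e1 : ψ i = some ⟨(i, j), h2⟩ := by
            simp only [hψ]; rw [dif_neg h, dif_pos h2]
          rw [e1]
          simp only [Option.elim, hc, if_neg h, eq_self_iff_true, if_true]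
        · have e1 : ψ i = some ⟨(j, i), lt_of_le_of_ne (not_lt.mp h2) (Ne.symm h)⟩ := by
            simp only [hψ]; rw [dif_neg h, dif_neg h2]
          rw [e1]
          simp only [Option.elim, hc, eq_self_iff_true, if_true]
          ring
    rw [Finset.sum_congr rfl hterm]
    have hk : ∑ i, g i * s i k = 0 := by
      have := congrFun hg k
      rw [Finset.sum_apply] at this
      simpa using this
    calc ∑ i, g i * (s i k * s j k) = (∑ i, g i * s i k) * s j k := by
          rw [Finset.sum_mul]; apply Finset.sum_congr rfl; intro i _; ring
      _ = 0 := by rw [hk, zero_mul]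
  have := Fintype.linearIndependent_iff.mp hschur c hzero none
  simpa [hc] using this


/-- The matrix whose columns are the sign vectors. -/
def SM (s : Fin r → Fin n → ℝ) : Matrix (Fin n) (Fin r) ℝ := Matrix.of fun k i => s i k
/-- The Gram matrix. -/
def GM (s : Fin r → Fin n → ℝ) : Matrix (Fin r) (Fin r) ℝ := (SM s)ᵀ * SM s
/-- Projection onto the span of the sign vectors. -/
def PM (s : Fin r → Fin n → ℝ) : Matrix (Fin n) (Fin n) ℝ := SM s * (GM s)⁻¹ * (SM s)ᵀ
/-- Complementary projection. -/
def CM (s : Fin r → Fin n → ℝ) : Matrix (Fin n) (Fin n) ℝ := 1 - PM s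

lemma dotProduct_self_pos {v : Fin n → ℝ} (hv : v ≠ 0) : 0 < v ⬝ᵥ v := by
  refine lt_of_le_of_ne (Finset.sum_nonneg fun i _ => mul_self_nonneg _) ?_
  intro h
  exact hv (dotProduct_self_eq_zero.mp h.symm)

lemma GM_posDef {s : Fin r → Fin n → ℝ} (hs : ∀ i, IsSignVec (s i))
    (hschur : SchurIndependent s) : (GM s).PosDef := by
  refine PosDef.of_dotProduct_mulVec_pos ?_ ?_
  · ext i j
    simp only [GM, conjTranspose_apply, mul_apply, transpose_apply, SM, Matrix.of_apply,
      star_trivial]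
    exact Finset.sum_congr rfl fun k _ => mul_comm _ _
  · intro x hx
    have h1 : (GM s) *ᵥ x = (SM s)ᵀ *ᵥ (SM s *ᵥ x) := by
      rw [Matrix.mulVec_mulVec]; rfl
    rw [h1, Matrix.dotProduct_mulVec, star_trivial, Matrix.vecMul_transpose]
    apply dotProduct_self_pos
    intro h0
    apply hx
    have hcomb : ∑ i, x i • s i = 0 := by
      funext k
      have := congrFun h0 k
      simp only [Matrix.mulVec, dotProduct, SM, Matrix.of_apply, Pi.zero_apply] at this
      rw [Finset.sum_apply]
      simp only [Pi.smul_apply, smul_eq_mul, Pi.zero_apply]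
      rw [← this]
      apply Finset.sum_congr rfl
      intro i _; ring
    have := Fintype.linearIndependent_iff.mp (lin_s hs hschur) x hcomb
    funext i; exact this i

section
variable {s : Fin r → Fin n → ℝ}

lemma GM_det_unit (hs : ∀ i, IsSignVec (s i)) (hschur : SchurIndependent s) : IsUnit (GM s).det :=
  isUnit_iff_ne_zero.mpr (GM_posDef hs hschur).det_pos.ne'

lemma GM_inv_mul (hs : ∀ i, IsSignVec (s i)) (hschur : SchurIndependent s) : (GM s)⁻¹ * GM s = 1 := Matrix.nonsing_inv_mul _ (GM_det_unit hs hschur)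
lemma GM_mul_inv (hs : ∀ i, IsSignVec (s i)) (hschur : SchurIndependent s) : GM s * (GM s)⁻¹ = 1 := Matrix.mul_nonsing_inv _ (GM_det_unit hs hschur)

lemma GM_transpose (hs : ∀ i, IsSignVec (s i)) (hschur : SchurIndependent s) : (GM s)ᵀ = GM s := by
  have := (GM_posDef hs hschur).1
  rw [Matrix.IsHermitian, conjTranspose_eq_transpose_of_trivial] at this
  exact this

lemma GM_inv_transpose (hs : ∀ i, IsSignVec (s i)) (hschur : SchurIndependent s) : ((GM s)⁻¹)ᵀ = (GM s)⁻¹ := by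
  rw [Matrix.transpose_nonsing_inv, GM_transpose hs hschur]

lemma PM_mul_SM (hs : ∀ i, IsSignVec (s i)) (hschur : SchurIndependent s) : PM s * SM s = SM s := by
  have h : (SM s)ᵀ * SM s = GM s := rfl
  calc PM s * SM s = SM s * ((GM s)⁻¹ * ((SM s)ᵀ * SM s)) := by
        simp only [PM, Matrix.mul_assoc]
    _ = SM s := by rw [h, GM_inv_mul hs hschur, Matrix.mul_one]

lemma CM_mul_SM (hs : ∀ i, IsSignVec (s i)) (hschur : SchurIndependent s) : CM s * SM s = 0 := by
  rw [CM, Matrix.sub_mul, Matrix.one_mul, PM_mul_SM hs hschur, sub_self]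

lemma PM_transpose (hs : ∀ i, IsSignVec (s i)) (hschur : SchurIndependent s) : (PM s)ᵀ = PM s := by
  simp only [PM, Matrix.transpose_mul, Matrix.transpose_transpose,
    GM_inv_transpose hs hschur, Matrix.mul_assoc]

lemma CM_transpose (hs : ∀ i, IsSignVec (s i)) (hschur : SchurIndependent s) : (CM s)ᵀ = CM s := by
  rw [CM, Matrix.transpose_sub, Matrix.transpose_one, PM_transpose hs hschur]

lemma PM_idem (hs : ∀ i, IsSignVec (s i)) (hschur : SchurIndependent s) : PM s * PM s = PM s := by
  have h : (SM s)ᵀ * SM s = GM s := rfl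
  calc PM s * PM s
      = SM s * ((GM s)⁻¹ * (((SM s)ᵀ * SM s) * ((GM s)⁻¹ * (SM s)ᵀ))) := by
        simp only [PM, Matrix.mul_assoc]
    _ = SM s * ((GM s)⁻¹ * (GM s * ((GM s)⁻¹ * (SM s)ᵀ))) := by rw [h]
    _ = SM s * (((GM s)⁻¹ * GM s) * ((GM s)⁻¹ * (SM s)ᵀ)) := by
        simp only [Matrix.mul_assoc]
    _ = PM s := by rw [GM_inv_mul hs hschur, Matrix.one_mul, PM, Matrix.mul_assoc]

lemma CM_idem (hs : ∀ i, IsSignVec (s i)) (hschur : SchurIndependent s) : CM s * CM s = CM s := by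
  have h := PM_idem hs hschur
  rw [CM]
  simp only [Matrix.sub_mul, Matrix.mul_sub, Matrix.one_mul, Matrix.mul_one, h]
  abel

/-- trace of M * Mᵀ is the sum of squares of entries. -/
lemma trace_mul_transpose_self (M : Matrix (Fin n) (Fin n) ℝ) :
    (M * Mᵀ).trace = ∑ i, ∑ j, (M i j) ^ 2 := by
  simp only [Matrix.trace, Matrix.diag_apply, Matrix.mul_apply, Matrix.transpose_apply, sq]

lemma trace_mul_transpose_self_nonneg (M : Matrix (Fin n) (Fin n) ℝ) :
    0 ≤ (M * Mᵀ).trace := by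
  rw [trace_mul_transpose_self]
  exact Finset.sum_nonneg fun i _ => Finset.sum_nonneg fun j _ => sq_nonneg _

lemma eq_zero_of_trace_mul_transpose_self (M : Matrix (Fin n) (Fin n) ℝ)
    (h : (M * Mᵀ).trace = 0) : M = 0 := by
  rw [trace_mul_transpose_self] at h
  ext i j
  have h1 := (Finset.sum_eq_zero_iff_of_nonneg
    (fun i _ => Finset.sum_nonneg fun j _ => sq_nonneg (M i j))).mp h i (Finset.mem_univ _)
  have h2 := (Finset.sum_eq_zero_iff_of_nonneg
    (fun j _ => sq_nonneg (M i j))).mp h1 j (Finset.mem_univ _)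
  simpa using sq_eq_zero_iff.mp h2

/-- The key trace lemma: nonnegativity and the kernel consequence. -/
lemma trace_CM (hs : ∀ i, IsSignVec (s i)) (hschur : SchurIndependent s) {X : Matrix (Fin n) (Fin n) ℝ} (hX : X.PosSemidef) :
    0 ≤ (CM s * X).trace ∧ ((CM s * X).trace = 0 → CM s * X = 0) := by
  obtain ⟨B, hB⟩ : ∃ B : Matrix (Fin n) (Fin n) ℝ, X = Bᴴ * B := by
    open scoped MatrixOrder in
    obtain ⟨B, hB1, -, hB2⟩ := CFC.exists_sqrt_of_isSelfAdjoint_of_quasispectrumRestricts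
      hX.isHermitian (QuasispectrumRestricts.nnreal_of_nonneg hX.nonneg)
    exact ⟨B, by rw [← hB2, ← Matrix.star_eq_conjTranspose, hB1.star_eq]⟩
  rw [conjTranspose_eq_transpose_of_trivial] at hB
  have hkey : CM s * X = (CM s * Bᵀ) * B := by rw [hB, Matrix.mul_assoc]
  have hBC : CM s * Bᵀ = (B * CM s)ᵀ := by
    rw [Matrix.transpose_mul, CM_transpose hs hschur]
  have htr : (CM s * X).trace = ((B * CM s) * (B * CM s)ᵀ).trace := by
    rw [hkey, Matrix.trace_mul_comm, hBC]
    congr 1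
    calc B * (B * CM s)ᵀ = B * (CM s * Bᵀ) := by rw [hBC]
      _ = B * ((CM s * CM s) * Bᵀ) := by rw [CM_idem hs hschur]
      _ = (B * CM s) * (CM s * Bᵀ) := by simp only [Matrix.mul_assoc]
      _ = (B * CM s) * (B * CM s)ᵀ := by rw [hBC]
  constructor
  · rw [htr]; exact trace_mul_transpose_self_nonneg _
  · intro h0
    rw [htr] at h0
    have hBC0 : B * CM s = 0 := eq_zero_of_trace_mul_transpose_self _ h0
    rw [hkey, hBC, hBC0]
    simp

/-- S * diagonal g * Sᵀ is the weighted sum of the rank one matrices. -/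
lemma SM_diagonal_SMT (g : Fin r → ℝ) :
    SM s * Matrix.diagonal g * (SM s)ᵀ = ∑ i, g i • vecMulVec (s i) (s i) := by
  ext k l
  rw [Matrix.sum_apply]
  simp only [Matrix.mul_apply, Matrix.diagonal_apply, Matrix.transpose_apply, SM, Matrix.of_apply,
    Matrix.smul_apply, Pi.smul_apply, smul_eq_mul, Matrix.vecMulVec_apply, mul_ite, ite_mul, mul_zero, zero_mul,
    Finset.sum_ite_eq, Finset.sum_ite_eq', Finset.mem_univ, if_true]
  apply Finset.sum_congr rfl
  intro i _; ring

end

lemma vecMulVec_psd (a : Fin n → ℝ) : (vecMulVec a a).PosSemidef := by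
  refine PosSemidef.of_dotProduct_mulVec_nonneg ?_ ?_
  · ext i j
    simp only [conjTranspose_apply, Matrix.vecMulVec_apply, star_trivial]
    ring
  · intro x
    have h1 : (vecMulVec a a) *ᵥ x = (a ⬝ᵥ x) • a := by
      funext k
      simp only [Matrix.mulVec, dotProduct, Matrix.vecMulVec_apply, Pi.smul_apply,
        smul_eq_mul]
      rw [Finset.sum_mul]
      apply Finset.sum_congr rfl
      intro l _; ring
    rw [h1]
    simp only [star_trivial, dotProduct_smul, smul_eq_mul]
    rw [dotProduct_comm]
    exact mul_self_nonneg _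

lemma smul_psd {X : Matrix (Fin n) (Fin n) ℝ} (hX : X.PosSemidef) {a : ℝ} (ha : 0 ≤ a) :
    (a • X).PosSemidef := by
  refine PosSemidef.of_dotProduct_mulVec_nonneg ?_ ?_
  · rw [Matrix.IsHermitian, Matrix.conjTranspose_smul, star_trivial, hX.1.eq]
  · intro x
    rw [Matrix.smul_mulVec, dotProduct_smul, smul_eq_mul]
    exact mul_nonneg ha (hX.dotProduct_mulVec_nonneg x)

lemma CM_mulVec_s {s : Fin r → Fin n → ℝ} (hs : ∀ i, IsSignVec (s i))
    (hschur : SchurIndependent s) (i : Fin r) : CM s *ᵥ s i = 0 := by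
  funext k
  have h := congrFun (congrFun (CM_mul_SM hs hschur) k) i
  simp only [Matrix.mul_apply, Matrix.zero_apply, SM, Matrix.of_apply] at h
  simpa [Matrix.mulVec, dotProduct] using h

lemma CM_mul_vecMulVec {s : Fin r → Fin n → ℝ} (hs : ∀ i, IsSignVec (s i))
    (hschur : SchurIndependent s) (i : Fin r) :
    CM s * vecMulVec (s i) (s i) = 0 := by
  have h := CM_mulVec_s hs hschur i
  ext k m
  have hk := congrFun h k
  simp only [Matrix.mulVec, dotProduct, Pi.zero_apply] at hk
  simp only [Matrix.mul_apply, Matrix.vecMulVec_apply, Matrix.zero_apply]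
  calc ∑ l, CM s k l * (s i l * s i m) = (∑ l, CM s k l * s i l) * s i m := by
        rw [Finset.sum_mul]; apply Finset.sum_congr rfl; intro l _; ring
    _ = 0 := by rw [hk, zero_mul]

/-- The membership lemma: an elliptope element annihilated by `CM` lies in the hull. -/
lemma mem_hull {s : Fin r → Fin n → ℝ} (hs : ∀ i, IsSignVec (s i))
    (hschur : SchurIndependent s) {Y : Matrix (Fin n) (Fin n) ℝ} (hY : Y.PosSemidef)
    (hd : ∀ k, Y k k = 1) (htr : (CM s * Y).trace = 0) :
    Y ∈ convexHull ℝ {M | ∃ i, M = vecMulVec (s i) (s i)} := by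
  classical
  have hCY : CM s * Y = 0 := (trace_CM hs hschur hY).2 htr
  have hYt : Yᵀ = Y := by
    have := hY.1
    rwa [Matrix.IsHermitian, conjTranspose_eq_transpose_of_trivial] at this
  have hYC : Y * CM s = 0 := by
    have h0 : (CM s * Y)ᵀ = 0 := by rw [hCY]; simp
    rwa [Matrix.transpose_mul, hYt, CM_transpose hs hschur] at h0
  have hPC : PM s = 1 - CM s := by rw [CM]; abel
  have hPY : PM s * Y = Y := by
    rw [hPC, Matrix.sub_mul, Matrix.one_mul, hCY, sub_zero]
  have hYP : Y * PM s = Y := by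
    rw [hPC, Matrix.mul_sub, Matrix.mul_one, hYC, sub_zero]
  set A : Matrix (Fin r) (Fin r) ℝ := (GM s)⁻¹ * (SM s)ᵀ * Y * SM s * (GM s)⁻¹ with hA
  have hYrep : SM s * A * (SM s)ᵀ = Y := by
    have h1 : SM s * A * (SM s)ᵀ = PM s * Y * PM s := by
      simp only [hA, PM, Matrix.mul_assoc]
    rw [h1, hPY, hYP]
  have hApsd : A.PosSemidef := by
    have h1 := hY.conjTranspose_mul_mul_same (SM s * (GM s)⁻¹)
    have h2 : (SM s * (GM s)⁻¹)ᴴ = (GM s)⁻¹ * (SM s)ᵀ := by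
      rw [conjTranspose_eq_transpose_of_trivial, Matrix.transpose_mul,
        GM_inv_transpose hs hschur]
    rw [h2] at h1
    have h3 : (GM s)⁻¹ * (SM s)ᵀ * Y * (SM s * (GM s)⁻¹) = A := by
      simp only [hA, Matrix.mul_assoc]
    rwa [h3] at h1
  have hAsymm : ∀ i j, A j i = A i j := by
    intro i j
    have := congrFun (congrFun hApsd.1.eq i) j
    simpa [conjTranspose_apply] using this
  have hdiag2 : ∀ k, (∑ i, ∑ j, A i j * (s i k * s j k)) = 1 := by
    intro k
    have h0 : (SM s * A * (SM s)ᵀ) k k = 1 := by rw [hYrep]; exact hd k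
    calc ∑ i, ∑ j, A i j * (s i k * s j k)
        = ∑ j, ∑ i, A i j * (s i k * s j k) := Finset.sum_comm
      _ = (SM s * A * (SM s)ᵀ) k k := by
          simp only [Matrix.mul_apply, Matrix.transpose_apply, SM, Matrix.of_apply,
            Finset.sum_mul]
          apply Finset.sum_congr rfl
          intro j _
          apply Finset.sum_congr rfl
          intro i _
          ring
      _ = 1 := h0
  obtain ⟨hoff, htr1⟩ := key_coeff hs hschur A hAsymm hdiag2
  have hAdiag : A = Matrix.diagonal (fun i => A i i) := by
    ext i j
    by_cases h : i = j
    · subst h; rw [Matrix.diagonal_apply_eq]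
    · rw [Matrix.diagonal_apply_ne _ h]
      rcases lt_or_gt_of_ne h with hlt | hgt
      · exact hoff i j hlt
      · exact (hAsymm i j).symm.trans (hoff j i hgt)
  have hY2 : Y = ∑ i, A i i • vecMulVec (s i) (s i) := by
    rw [← SM_diagonal_SMT (s := s) (fun i => A i i), ← hAdiag]
    exact hYrep.symm
  have hnn : ∀ i, 0 ≤ A i i := by
    intro i
    have := hApsd.dotProduct_mulVec_nonneg (Pi.single i 1)
    simpa [Matrix.mulVec, dotProduct, Pi.single_apply, mul_ite, ite_mul, mul_zero,
      zero_mul, mul_one, one_mul, Finset.sum_ite_eq, Finset.sum_ite_eq'] using this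
  have hpos : (0:ℝ) < ∑ i, A i i := by rw [htr1]; norm_num
  have hz : ∀ i ∈ (Finset.univ : Finset (Fin r)),
      vecMulVec (s i) (s i) ∈ {M : Matrix (Fin n) (Fin n) ℝ | ∃ i, M = vecMulVec (s i) (s i)} :=
    fun i _ => ⟨i, rfl⟩
  have hmem := Finset.centerMass_mem_convexHull (Finset.univ)
    (fun i (_ : i ∈ Finset.univ) => hnn i) hpos hz
  rw [Finset.centerMass_eq_of_sum_1 _ _ htr1] at hmem
  rwa [hY2]

/-- Linear independence of the rank-one sign matrices. -/
lemma lin_V {s : Fin r → Fin n → ℝ} (hs : ∀ i, IsSignVec (s i))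
    (hschur : SchurIndependent s) :
    LinearIndependent ℝ (fun i => vecMulVec (s i) (s i)) := by
  rw [Fintype.linearIndependent_iff]
  intro g hg j
  have h0 : SM s * Matrix.diagonal g * (SM s)ᵀ = 0 := by
    rw [SM_diagonal_SMT]; exact hg
  have hGr : (SM s)ᵀ * SM s = GM s := rfl
  have h1 : Matrix.diagonal g =
      (GM s)⁻¹ * ((SM s)ᵀ * (SM s * Matrix.diagonal g * (SM s)ᵀ) * SM s) * (GM s)⁻¹ := by
    calc Matrix.diagonal g = 1 * Matrix.diagonal g * 1 := by
          rw [Matrix.one_mul, Matrix.mul_one]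
      _ = ((GM s)⁻¹ * GM s) * Matrix.diagonal g * (GM s * (GM s)⁻¹) := by
          rw [GM_inv_mul hs hschur, GM_mul_inv hs hschur]
      _ = ((GM s)⁻¹ * ((SM s)ᵀ * SM s)) * Matrix.diagonal g *
            (((SM s)ᵀ * SM s) * (GM s)⁻¹) := by rw [hGr]
      _ = (GM s)⁻¹ * ((SM s)ᵀ * (SM s * Matrix.diagonal g * (SM s)ᵀ) * SM s) * (GM s)⁻¹ := by
          simp only [Matrix.mul_assoc]
  rw [h0] at h1
  simp only [Matrix.mul_zero, Matrix.zero_mul] at h1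
  have := congrFun (congrFun h1 j) j
  simpa using this

end SchurAux

end

/-- the convex hull of the rank-one sign matrices generated by a Schur independent
family of sign vectors is a simplicial face of the elliptope. -/
theorem simplicialFace_of_schurIndependent {n r : ℕ}
    (s : Fin r → Fin n → ℝ) (hs : ∀ i, IsSignVec (s i))
    (hschur : SchurIndependent s) :
    IsSimplicialFace (elliptope n)
      (convexHull ℝ {M | ∃ i, M = vecMulVec (s i) (s i)}) := by
  classical
  have hEconv : Convex ℝ (elliptope n) := by
    intro X hX Y hY a b ha hb hab
    refine ⟨Matrix.PosSemidef.add (SchurAux.smul_psd hX.1 ha) (SchurAux.smul_psd hY.1 hb),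
      fun k => ?_⟩
    simp only [Matrix.add_apply, Matrix.smul_apply, smul_eq_mul]
    rw [hX.2 k, hY.2 k, mul_one, mul_one]
    exact hab
  have hgen : {M | ∃ i, M = vecMulVec (s i) (s i)} ⊆ elliptope n := by
    rintro M ⟨i, rfl⟩
    refine ⟨SchurAux.vecMulVec_psd (s i), fun k => ?_⟩
    rw [Matrix.vecMulVec_apply]
    exact SchurAux.sq_one (hs i) k
  have hFsub := convexHull_min hgen hEconv
  have hZconv : Convex ℝ {M : Matrix (Fin n) (Fin n) ℝ | (SchurAux.CM s * M).trace = 0} := by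
    intro X hX Y hY a b ha hb hab
    simp only [Set.mem_setOf_eq] at hX hY ⊢
    rw [Matrix.mul_add, Matrix.mul_smul, Matrix.mul_smul, Matrix.trace_add, Matrix.trace_smul,
      Matrix.trace_smul, hX, hY]
    simp
  have hZgen : {M | ∃ i, M = vecMulVec (s i) (s i)} ⊆
      {M : Matrix (Fin n) (Fin n) ℝ | (SchurAux.CM s * M).trace = 0} := by
    rintro M ⟨i, rfl⟩
    simp only [Set.mem_setOf_eq, SchurAux.CM_mul_vecMulVec hs hschur i, Matrix.trace_zero]
  have hFZ := convexHull_min hZgen hZconv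
  constructor
  · refine ⟨hFsub, convex_convexHull ℝ _, ?_⟩
    intro x hx y hy τ hτ0 hτ1 hmem
    have hz := hFZ hmem
    simp only [Set.mem_setOf_eq] at hz
    rw [Matrix.mul_add, Matrix.mul_smul, Matrix.mul_smul, Matrix.trace_add, Matrix.trace_smul,
      Matrix.trace_smul, smul_eq_mul, smul_eq_mul] at hz
    have hx0 := (SchurAux.trace_CM hs hschur hx.1).1
    have hy0 := (SchurAux.trace_CM hs hschur hy.1).1
    have h1 : 0 ≤ τ * (SchurAux.CM s * x).trace := mul_nonneg hτ0.le hx0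
    have h2 : 0 ≤ (1 - τ) * (SchurAux.CM s * y).trace :=
      mul_nonneg (by linarith) hy0
    have h3 : τ * (SchurAux.CM s * x).trace = 0 := by linarith
    have h4 : (1 - τ) * (SchurAux.CM s * y).trace = 0 := by linarith
    have hxt : (SchurAux.CM s * x).trace = 0 := by
      rcases mul_eq_zero.mp h3 with h | h
      · exact absurd h (ne_of_gt hτ0)
      · exact h
    have hyt : (SchurAux.CM s * y).trace = 0 := by
      rcases mul_eq_zero.mp h4 with h | h
      · exact absurd h (by intro h'; linarith)
      · exact h
    exact ⟨SchurAux.mem_hull hs hschur hx.1 hx.2 hxt,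
      SchurAux.mem_hull hs hschur hy.1 hy.2 hyt⟩
  · refine ⟨Finset.image (fun i => vecMulVec (s i) (s i)) Finset.univ, ?_, ?_⟩
    · have hLI := SchurAux.lin_V hs hschur
      have hinjV : Function.Injective (fun i => vecMulVec (s i) (s i)) := hLI.injective
      set t := Finset.image (fun i => vecMulVec (s i) (s i)) Finset.univ with ht
      have hbij : Function.Bijective (fun i : Fin r =>
          (⟨vecMulVec (s i) (s i), Finset.mem_image_of_mem _ (Finset.mem_univ i)⟩ :
            {x // x ∈ t})) := by
        constructor
        · intro a b hab
          exact hinjV (congrArg Subtype.val hab)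
        · rintro ⟨x, hx⟩
          rcases Finset.mem_image.mp hx with ⟨i, _, hi⟩
          exact ⟨i, Subtype.ext hi⟩
      have hLIsub : LinearIndependent ℝ (Subtype.val : {x // x ∈ t} → Matrix (Fin n) (Fin n) ℝ) :=
        (linearIndependent_equiv' (Equiv.ofBijective _ hbij) rfl).mp hLI
      rw [affineIndependent_iff]
      intro sfin w hw0 hwsum e he
      have hext : ∑ x : {x // x ∈ t},
          (if x ∈ sfin then w x else 0) • (x : Matrix (Fin n) (Fin n) ℝ) = 0 := by
        calc ∑ x : {x // x ∈ t}, (if x ∈ sfin then w x else 0) • (x : Matrix (Fin n) (Fin n) ℝ)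
            = ∑ x ∈ sfin, w x • (x : Matrix (Fin n) (Fin n) ℝ) := by
              simp only [ite_smul, zero_smul]
              rw [Finset.sum_ite_mem, Finset.univ_inter]
          _ = 0 := hwsum
      have hco := Fintype.linearIndependent_iff.mp hLIsub _ hext e
      simpa [he] using hco
    · congr 1
      ext M
      simp only [Set.mem_setOf_eq, Finset.coe_image, Finset.coe_univ, Set.image_univ,
        Set.mem_range]
      constructor
      · rintro ⟨i, rfl⟩; exact ⟨i, rfl⟩
      · rintro ⟨i, rfl⟩; exact ⟨i, rfl⟩
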